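/- For the indicator-regularized function f(M) = ½‖M‖_F² on matrices of rank at most r, the convex envelope ½‖M‖_{F,r*}² agrees with f exactly on the set {M : rank(M) ≤ r}, i.e., rank(M) ≤ r implies ‖M‖_{F,r*} = ‖M‖_F. -/

import Mathlib

open Matrix BigOperators Finset

/-- Singular values of a real `n × m` matrix, in nonincreasing order, 0-indexed:
`sv M 0 ≥ sv M 1 ≥ …` are the singular values (square roots of the eigenvalues of `Mᵀ M`). -/
noncomputable def sv {n m : ℕ} (M : Matrix (Fin n) (Fin m) ℝ) (i : ℕ) : ℝ :=
  (((List.ofFn fun j : Fin m =>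
      Real.sqrt ((show (Mᵀ * M).IsHermitian by
        simpa [Matrix.conjTranspose_eq_transpose_of_trivial] using
          Matrix.isHermitian_conjTranspose_mul_self M).eigenvalues j)).mergeSort
      (fun a b => decide (a ≥ b))).getD i 0)

/-- Trace inner product `⟨M, Y⟩ = tr (Mᵀ Y)`. -/
def ip {n m : ℕ} (M Y : Matrix (Fin n) (Fin m) ℝ) : ℝ := ∑ i, ∑ j, M i j * Y i j

/-- Frobenius norm. -/
noncomputable def fro {n m : ℕ} (M : Matrix (Fin n) (Fin m) ℝ) : ℝ :=
  Real.sqrt (∑ i, ∑ j, M i j ^ 2)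

/-- Truncated Frobenius norm `‖M‖_{F,r} = sqrt (σ₁² + ⋯ + σᵣ²)`. -/
noncomputable def truncFro {n m : ℕ} (r : ℕ) (M : Matrix (Fin n) (Fin m) ℝ) : ℝ :=
  Real.sqrt (∑ i ∈ Finset.range r, sv M i ^ 2)

/-- Dual norm with respect to the trace inner product. -/
noncomputable def dualNorm {n m : ℕ} (ν : Matrix (Fin n) (Fin m) ℝ → ℝ)
    (M : Matrix (Fin n) (Fin m) ℝ) : ℝ :=
  sSup {c : ℝ | ∃ Y, ν Y ≤ 1 ∧ c = ip M Y}

/-- Low-rank inducing Frobenius norm `‖·‖_{F,r*}`, the dual of `‖·‖_{F,r}`. -/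
noncomputable def lowRankFro {n m : ℕ} (r : ℕ) (M : Matrix (Fin n) (Fin m) ℝ) : ℝ :=
  dualNorm (truncFro r) M

/-- Ky Fan `r`-norm: sum of the `r` largest singular values. -/
noncomputable def kyFan {n m : ℕ} (r : ℕ) (M : Matrix (Fin n) (Fin m) ℝ) : ℝ :=
  ∑ i ∈ Finset.range r, sv M i

/-- Nuclear norm: sum of all singular values. -/
noncomputable def nuclear {n m : ℕ} (M : Matrix (Fin n) (Fin m) ℝ) : ℝ :=
  ∑ i ∈ Finset.range (min n m), sv M i

/-! ### Auxiliary lemmas about `sv` -/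

private theorem Matrix.isHermitian_transpose_mul_self {n m : ℕ} (M : Matrix (Fin n) (Fin m) ℝ) :
    (Mᵀ * M).IsHermitian := by
  simpa [Matrix.conjTranspose_eq_transpose_of_trivial] using
    Matrix.isHermitian_conjTranspose_mul_self M

private noncomputable def svList {n m : ℕ} (M : Matrix (Fin n) (Fin m) ℝ) : List ℝ :=
  ((List.ofFn fun j : Fin m =>
      Real.sqrt ((Matrix.isHermitian_transpose_mul_self M).eigenvalues j)).mergeSort
      (fun a b => decide (a ≥ b)))

private lemma sv_eq_getD {n m : ℕ} (M : Matrix (Fin n) (Fin m) ℝ) (i : ℕ) :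
    sv M i = (svList M).getD i 0 := rfl

private lemma svList_perm {n m : ℕ} (M : Matrix (Fin n) (Fin m) ℝ) :
    List.Perm (svList M) (List.ofFn fun j : Fin m =>
      Real.sqrt ((Matrix.isHermitian_transpose_mul_self M).eigenvalues j)) :=
  List.mergeSort_perm _ _

private lemma svList_length {n m : ℕ} (M : Matrix (Fin n) (Fin m) ℝ) :
    (svList M).length = m := by
  simpa using (svList_perm M).length_eq

private lemma svList_sorted {n m : ℕ} (M : Matrix (Fin n) (Fin m) ℝ) :
    (svList M).Pairwise (· ≥ ·) := by
  have h := List.pairwise_mergeSort (le := fun a b : ℝ => decide (a ≥ b))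
    (fun a b c h1 h2 => by simp only [decide_eq_true_eq] at *; exact le_trans h2 h1)
    (fun a b => by simpa using le_total b a)
    (List.ofFn fun j : Fin m =>
      Real.sqrt ((Matrix.isHermitian_transpose_mul_self M).eigenvalues j))
  exact h.imp (by simp)

private lemma svList_nonneg {n m : ℕ} (M : Matrix (Fin n) (Fin m) ℝ) :
    ∀ x ∈ svList M, 0 ≤ x := by
  intro x hx
  rw [svList, List.mem_mergeSort, List.mem_ofFn] at hx
  obtain ⟨j, rfl⟩ := hx
  exact Real.sqrt_nonneg _

private lemma sv_nonneg {n m : ℕ} (M : Matrix (Fin n) (Fin m) ℝ) (i : ℕ) : 0 ≤ sv M i := by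
  rw [sv_eq_getD]
  rcases lt_or_ge i (svList M).length with h | h
  · exact svList_nonneg M _ (by rw [List.getD_eq_getElem _ _ h]; exact List.getElem_mem h)
  · rw [List.getD_eq_default _ _ h]

private lemma sv_anti {n m : ℕ} (M : Matrix (Fin n) (Fin m) ℝ) {i j : ℕ} (hij : i ≤ j) :
    sv M j ≤ sv M i := by
  rcases eq_or_lt_of_le hij with rfl | hij
  · exact le_rfl
  rcases lt_or_ge j (svList M).length with h | h
  · rw [sv_eq_getD, sv_eq_getD, List.getD_eq_getElem _ _ h,
      List.getD_eq_getElem _ _ (lt_trans hij h)]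
    exact List.pairwise_iff_get.mp (svList_sorted M) ⟨i, lt_trans hij h⟩ ⟨j, h⟩ hij
  · rw [sv_eq_getD M j, List.getD_eq_default _ _ h]
    exact sv_nonneg M i

private lemma list_sum_getD (g : ℝ → ℝ) :
    ∀ l : List ℝ, ∑ i ∈ Finset.range l.length, g (l.getD i 0) = (l.map g).sum
  | [] => by simp
  | a :: l => by
    rw [List.length_cons, Finset.sum_range_succ']
    simp only [List.getD_cons_succ, List.getD_cons_zero]
    rw [list_sum_getD g l, List.map_cons, List.sum_cons, add_comm]

/-- Master lemma: a sum of `g` over the singular values equals the sum of `g ∘ sqrt` over the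
(unsorted) eigenvalues of `MᵀM`. -/
private lemma sum_g_sv {n m : ℕ} (M : Matrix (Fin n) (Fin m) ℝ) (g : ℝ → ℝ) :
    ∑ i ∈ Finset.range m, g (sv M i) =
      ∑ j : Fin m, g (Real.sqrt ((Matrix.isHermitian_transpose_mul_self M).eigenvalues j)) := by
  have h1 : ∑ i ∈ Finset.range ((svList M).length), g ((svList M).getD i 0)
      = ((svList M).map g).sum := list_sum_getD g _
  rw [svList_length] at h1
  simp only [sv_eq_getD]
  refine h1.trans ?_
  rw [((svList_perm M).map g).sum_eq, List.map_ofFn, List.sum_ofFn]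
  rfl

private lemma eig_nonneg {n m : ℕ} (M : Matrix (Fin n) (Fin m) ℝ) (j : Fin m) :
    0 ≤ (Matrix.isHermitian_transpose_mul_self M).eigenvalues j :=
  (Matrix.posSemidef_conjTranspose_mul_self M).eigenvalues_nonneg j

private lemma trace_diag_mul {m : ℕ} (d : Fin m → ℝ) (C : Matrix (Fin m) (Fin m) ℝ) :
    (Matrix.diagonal d * C).trace = ∑ j, d j * C j j := by
  simp [Matrix.trace, Matrix.diag, Matrix.diagonal_mul]

private lemma ip_eq_trace {n m : ℕ} (A B : Matrix (Fin n) (Fin m) ℝ) :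
    ip A B = (Aᵀ * B).trace := by
  rw [Matrix.trace, ip]
  simp only [Matrix.diag, Matrix.mul_apply, Matrix.transpose_apply]
  exact Finset.sum_comm

/-- Sum of squared singular values equals the squared Frobenius norm. -/
private lemma sum_sv_sq {n m : ℕ} (M : Matrix (Fin n) (Fin m) ℝ) :
    ∑ i ∈ Finset.range m, sv M i ^ 2 = ∑ i, ∑ j, M i j ^ 2 := by
  rw [sum_g_sv M (fun x => x ^ 2)]
  have h1 : ∀ j : Fin m,
      Real.sqrt ((Matrix.isHermitian_transpose_mul_self M).eigenvalues j) ^ 2 =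
        (Matrix.isHermitian_transpose_mul_self M).eigenvalues j := fun j =>
    Real.sq_sqrt (eig_nonneg M j)
  rw [Finset.sum_congr rfl fun j _ => h1 j]
  -- sum of eigenvalues = trace (MᵀM) = ∑ M²
  have hS := Matrix.isHermitian_transpose_mul_self M
  have hspec : Mᵀ * M = (hS.eigenvectorUnitary : Matrix (Fin m) (Fin m) ℝ) *
      Matrix.diagonal hS.eigenvalues *
      (hS.eigenvectorUnitary : Matrix (Fin m) (Fin m) ℝ)ᵀ := by
    simpa [Matrix.star_eq_conjTranspose, Matrix.conjTranspose_eq_transpose_of_trivial,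
      Function.comp] using hS.spectral_theorem
  have hUtU : (hS.eigenvectorUnitary : Matrix (Fin m) (Fin m) ℝ)ᵀ *
      (hS.eigenvectorUnitary : Matrix (Fin m) (Fin m) ℝ) = 1 := by
    simpa [Matrix.star_eq_conjTranspose, Matrix.conjTranspose_eq_transpose_of_trivial] using
      hS.eigenvectorUnitary.2.1
  have htr : (Mᵀ * M).trace = ∑ j, hS.eigenvalues j := by
    rw [show (Mᵀ * M).trace = _ from congrArg Matrix.trace hspec, Matrix.trace_mul_comm,
      ← Matrix.mul_assoc, hUtU, Matrix.one_mul]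
    simp [Matrix.trace, Matrix.diag]
  have htr2 : (Mᵀ * M).trace = ∑ i, ∑ j, M i j ^ 2 := by
    rw [Matrix.trace]
    simp only [Matrix.diag, Matrix.mul_apply, Matrix.transpose_apply]
    rw [Finset.sum_comm]
    simp [sq]
  rw [← htr, htr2]

/-! ### Projection onto the row space -/

private noncomputable def Ksub {n m : ℕ} (M : Matrix (Fin n) (Fin m) ℝ) :
    Submodule ℝ (EuclideanSpace ℝ (Fin m)) :=
  (Submodule.span ℝ (Set.range M)).map
    ((WithLp.linearEquiv 2 ℝ (Fin m → ℝ)).symm : (Fin m → ℝ) →ₗ[ℝ] EuclideanSpace ℝ (Fin m))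

private lemma finrank_Ksub {n m : ℕ} (M : Matrix (Fin n) (Fin m) ℝ) :
    Module.finrank ℝ (Ksub M) = M.rank := by
  rw [Ksub, LinearEquiv.finrank_map_eq]
  have h1 : Mᵀ.rank = M.rank := Matrix.rank_transpose M
  have h2 := Matrix.rank_eq_finrank_span_cols Mᵀ
  rw [h1] at h2
  exact (Matrix.rank_eq_finrank_span_row M).symm

private lemma row_mem_Ksub {n m : ℕ} (M : Matrix (Fin n) (Fin m) ℝ) (j : Fin n) :
    (WithLp.linearEquiv 2 ℝ (Fin m → ℝ)).symm (M j) ∈ Ksub M :=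
  Submodule.mem_map_of_mem (Submodule.subset_span ⟨j, rfl⟩)

private noncomputable def kdim {n m : ℕ} (M : Matrix (Fin n) (Fin m) ℝ) : ℕ :=
  Module.finrank ℝ (Ksub M)

private noncomputable def wvec {n m : ℕ} (M : Matrix (Fin n) (Fin m) ℝ) :
    Fin (kdim M) → EuclideanSpace ℝ (Fin m) :=
  fun i => ((stdOrthonormalBasis ℝ (Ksub M)) i : EuclideanSpace ℝ (Fin m))

private lemma wvec_orthonormal {n m : ℕ} (M : Matrix (Fin n) (Fin m) ℝ) :
    Orthonormal ℝ (wvec M) := by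
  rw [orthonormal_iff_ite]
  intro i j
  have h := orthonormal_iff_ite.mp (stdOrthonormalBasis ℝ (Ksub M)).orthonormal i j
  refine Eq.trans ?_ h
  rfl

private lemma inner_eval {m : ℕ} (x y : EuclideanSpace ℝ (Fin m)) :
    (inner ℝ x y : ℝ) = ∑ a, x a * y a := by
  simp [PiLp.inner_apply, RCLike.inner_apply, conj_trivial, mul_comm]

private lemma wvec_expand {n m : ℕ} (M : Matrix (Fin n) (Fin m) ℝ)
    {v : EuclideanSpace ℝ (Fin m)} (hv : v ∈ Ksub M) :
    ∑ i, (inner ℝ (wvec M i) v : ℝ) • wvec M i = v := by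
  have h := (stdOrthonormalBasis ℝ (Ksub M)).sum_repr' ⟨v, hv⟩
  have h2 := congrArg (Subtype.val : Ksub M → EuclideanSpace ℝ (Fin m)) h
  rw [Submodule.coe_sum] at h2
  simp only [Submodule.coe_smul] at h2
  exact h2

/-- The projection matrix onto the row space of `M`. -/
private noncomputable def Qmat {n m : ℕ} (M : Matrix (Fin n) (Fin m) ℝ) :
    Matrix (Fin m) (Fin m) ℝ :=
  Matrix.of fun a c => ∑ i, wvec M i a * wvec M i c

private lemma Qmat_apply {n m : ℕ} (M : Matrix (Fin n) (Fin m) ℝ) (a c : Fin m) :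
    Qmat M a c = ∑ i, wvec M i a * wvec M i c := rfl

private lemma Qmat_symm {n m : ℕ} (M : Matrix (Fin n) (Fin m) ℝ) :
    (Qmat M)ᵀ = Qmat M := by
  ext a c
  simp only [Matrix.transpose_apply, Qmat_apply]
  exact Finset.sum_congr rfl fun i _ => mul_comm _ _

private lemma Qmat_mul_self {n m : ℕ} (M : Matrix (Fin n) (Fin m) ℝ) :
    Qmat M * Qmat M = Qmat M := by
  ext a c
  rw [Matrix.mul_apply]
  simp only [Qmat_apply]
  have horth := orthonormal_iff_ite.mp (wvec_orthonormal M)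
  calc ∑ b, (∑ i, wvec M i a * wvec M i b) * ∑ j, wvec M j b * wvec M j c
      = ∑ b, ∑ i, ∑ j, (wvec M i a * wvec M j c) * (wvec M i b * wvec M j b) := by
        refine Finset.sum_congr rfl fun b _ => ?_
        rw [Finset.sum_mul]
        refine Finset.sum_congr rfl fun i _ => ?_
        rw [Finset.mul_sum]
        refine Finset.sum_congr rfl fun j _ => by ring
    _ = ∑ i, ∑ j, (wvec M i a * wvec M j c) * ∑ b, wvec M i b * wvec M j b := by
        rw [Finset.sum_comm]
        refine Finset.sum_congr rfl fun i _ => ?_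
        rw [Finset.sum_comm]
        refine Finset.sum_congr rfl fun j _ => (Finset.mul_sum _ _ _).symm
    _ = ∑ i, ∑ j, (wvec M i a * wvec M j c) * if i = j then 1 else 0 := by
        refine Finset.sum_congr rfl fun i _ => Finset.sum_congr rfl fun j _ => ?_
        rw [← horth i j, inner_eval]
    _ = ∑ i, wvec M i a * wvec M i c := by
        simp

private lemma Qmat_trace {n m : ℕ} (M : Matrix (Fin n) (Fin m) ℝ) :
    (Qmat M).trace = (kdim M : ℝ) := by
  have horth := orthonormal_iff_ite.mp (wvec_orthonormal M)
  rw [Matrix.trace]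
  simp only [Matrix.diag, Qmat_apply]
  rw [Finset.sum_comm]
  have : ∀ i : Fin (kdim M), ∑ a, wvec M i a * wvec M i a = 1 := by
    intro i
    have := horth i i
    rw [inner_eval] at this
    simpa using this
  simp [this]

private lemma mulVec_Qmat_eq_self {n m : ℕ} (M : Matrix (Fin n) (Fin m) ℝ)
    {v : EuclideanSpace ℝ (Fin m)} (hv : v ∈ Ksub M) (a : Fin m) :
    ∑ b, Qmat M a b * v b = v a := by
  have h := wvec_expand M hv
  have h2 : ∑ i, (inner ℝ (wvec M i) v : ℝ) * wvec M i a = v a := by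
    conv_rhs => rw [← h]
    simp only [inner_eval]
    rw [WithLp.ofLp_sum, Finset.sum_apply]
    simp [PiLp.smul_apply, smul_eq_mul]
  calc ∑ b, Qmat M a b * v b
      = ∑ i, (inner ℝ (wvec M i) v : ℝ) * wvec M i a := by
        simp only [Qmat_apply, Finset.sum_mul]
        rw [Finset.sum_comm]
        refine Finset.sum_congr rfl fun i _ => ?_
        rw [inner_eval, Finset.sum_mul]
        exact Finset.sum_congr rfl fun b _ => by ring
    _ = v a := h2

private lemma M_mul_Qmat {n m : ℕ} (M : Matrix (Fin n) (Fin m) ℝ) :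
    M * Qmat M = M := by
  ext j a
  rw [Matrix.mul_apply]
  have h := mulVec_Qmat_eq_self M (row_mem_Ksub M j) a
  calc ∑ b, M j b * Qmat M b a = ∑ b, Qmat M a b * M j b := by
        refine Finset.sum_congr rfl fun b _ => ?_
        rw [show Qmat M b a = Qmat M a b from by
          rw [Qmat_apply, Qmat_apply]
          exact Finset.sum_congr rfl fun i _ => mul_comm _ _]
        ring
    _ = M j a := h


/-- Sum of squares of entries as a trace. -/
private lemma sum_sq_eq_trace {n m : ℕ} (A : Matrix (Fin n) (Fin m) ℝ) :
    ∑ i, ∑ j, A i j ^ 2 = (Aᵀ * A).trace := by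
  rw [Matrix.trace]
  simp only [Matrix.diag, Matrix.mul_apply, Matrix.transpose_apply]
  rw [Finset.sum_comm]
  simp [sq]

/-- Key spectral inequality: the trace of `YᵀY` against a rank-`≤ r` orthogonal projection is at
most the sum of the largest `r` eigenvalues of `YᵀY`. -/
private lemma trace_mul_Qmat_le {n m r : ℕ} (hrm : r ≤ m)
    (M Y : Matrix (Fin n) (Fin m) ℝ) (hk : kdim M ≤ r) :
    ((Yᵀ * Y) * Qmat M).trace ≤ ∑ i ∈ Finset.range r, sv Y i ^ 2 := by
  set hS := Matrix.isHermitian_transpose_mul_self Y with hSdef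
  set U : Matrix (Fin m) (Fin m) ℝ := (hS.eigenvectorUnitary : Matrix (Fin m) (Fin m) ℝ)
    with hUdef
  set d : Fin m → ℝ := hS.eigenvalues with hddef
  have hspec : Yᵀ * Y = U * Matrix.diagonal d * Uᵀ := by
    simpa [Matrix.star_eq_conjTranspose, Matrix.conjTranspose_eq_transpose_of_trivial,
      Function.comp] using hS.spectral_theorem
  have hUtU : Uᵀ * U = 1 := by
    simpa [Matrix.star_eq_conjTranspose, Matrix.conjTranspose_eq_transpose_of_trivial] using
      hS.eigenvectorUnitary.2.1
  have hUUt : U * Uᵀ = 1 := by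
    simpa [Matrix.star_eq_conjTranspose, Matrix.conjTranspose_eq_transpose_of_trivial] using
      hS.eigenvectorUnitary.2.2
  set c : Fin m → ℝ := fun j => (Uᵀ * Qmat M * U) j j with hcdef
  -- trace identity
  have htrace : ((Yᵀ * Y) * Qmat M).trace = ∑ j, d j * c j := by
    rw [hspec]
    have e1 : U * Matrix.diagonal d * Uᵀ * Qmat M
        = U * (Matrix.diagonal d * (Uᵀ * Qmat M)) := by
      rw [Matrix.mul_assoc, Matrix.mul_assoc]
    rw [e1, Matrix.trace_mul_comm]
    have e2 : Matrix.diagonal d * (Uᵀ * Qmat M) * U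
        = Matrix.diagonal d * (Uᵀ * Qmat M * U) := by
      rw [Matrix.mul_assoc]
    rw [e2, trace_diag_mul]
  -- formula for c
  have hc_formula : ∀ j, c j = ∑ i, (∑ a, wvec M i a * U a j) ^ 2 := by
    intro j
    rw [hcdef]
    show ((Uᵀ * Qmat M) * U) j j = _
    rw [Matrix.mul_apply]
    calc ∑ b, (Uᵀ * Qmat M) j b * U b j
        = ∑ b, (∑ a, U a j * Qmat M a b) * U b j := by
          refine Finset.sum_congr rfl fun b _ => ?_
          rw [Matrix.mul_apply]
          rfl
      _ = ∑ b, ∑ a, ∑ i, (wvec M i a * U a j) * (wvec M i b * U b j) := by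
          refine Finset.sum_congr rfl fun b _ => ?_
          rw [Finset.sum_mul]
          refine Finset.sum_congr rfl fun a _ => ?_
          rw [Qmat_apply, Finset.mul_sum, Finset.sum_mul]
          exact Finset.sum_congr rfl fun i _ => by ring
      _ = ∑ a, ∑ i, ∑ b, (wvec M i a * U a j) * (wvec M i b * U b j) := by
          rw [Finset.sum_comm]
          exact Finset.sum_congr rfl fun a _ => Finset.sum_comm
      _ = ∑ i, ∑ a, ∑ b, (wvec M i a * U a j) * (wvec M i b * U b j) :=
          Finset.sum_comm
      _ = ∑ i, (∑ a, wvec M i a * U a j) * (∑ b, wvec M i b * U b j) := by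
          refine Finset.sum_congr rfl fun i _ => ?_
          rw [Finset.sum_mul_sum]
      _ = ∑ i, (∑ a, wvec M i a * U a j) ^ 2 := by
          refine Finset.sum_congr rfl fun i _ => ?_
          rw [sq]
  have hc0 : ∀ j, 0 ≤ c j := fun j => by
    rw [hc_formula j]; exact Finset.sum_nonneg fun i _ => sq_nonneg _
  -- c j ≤ 1 by Bessel
  have hc1 : ∀ j, c j ≤ 1 := by
    intro j
    set u : EuclideanSpace ℝ (Fin m) := (WithLp.equiv 2 (Fin m → ℝ)).symm (fun a => U a j)
      with hudef
    have hb := (wvec_orthonormal M).sum_inner_products_le (𝕜 := ℝ)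
      (s := Finset.univ) u
    have hnorm : ‖u‖ ^ 2 = 1 := by
      rw [← real_inner_self_eq_norm_sq, inner_eval]
      have : ∑ a, u a * u a = (Uᵀ * U) j j := by
        rw [Matrix.mul_apply]
        exact Finset.sum_congr rfl fun a _ => rfl
      rw [this, hUtU, Matrix.one_apply_eq]
    rw [hc_formula j]
    calc ∑ i, (∑ a, wvec M i a * U a j) ^ 2
        = ∑ i, ‖(inner ℝ (wvec M i) u : ℝ)‖ ^ 2 := by
          refine Finset.sum_congr rfl fun i _ => ?_
          rw [inner_eval, Real.norm_eq_abs, sq_abs]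
          rfl
      _ ≤ ‖u‖ ^ 2 := hb
      _ = 1 := hnorm
  -- sum of c
  have hcsum : ∑ j, c j ≤ (r : ℝ) := by
    have h1 : ∑ j, c j = (Uᵀ * Qmat M * U).trace := by
      rw [Matrix.trace]; rfl
    rw [h1, Matrix.trace_mul_comm, ← Matrix.mul_assoc, hUUt, Matrix.one_mul, Qmat_trace]
    exact_mod_cast hk
  have hd0 : ∀ j, 0 ≤ d j := fun j => eig_nonneg Y j
  -- the threshold argument
  set t : ℝ := sv Y r ^ 2 with htdef
  have ht0 : 0 ≤ t := sq_nonneg _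
  have step1 : ∀ j, d j * c j ≤ max (d j - t) 0 + t * c j := by
    intro j
    rcases le_or_gt (d j) t with h | h
    · have h1 : d j * c j ≤ t * c j := mul_le_mul_of_nonneg_right h (hc0 j)
      have h2 : (0 : ℝ) ≤ max (d j - t) 0 := le_max_right _ _
      linarith
    · have h1 : (d j - t) * c j ≤ (d j - t) * 1 :=
        mul_le_mul_of_nonneg_left (hc1 j) (by linarith)
      have h2 : d j - t ≤ max (d j - t) 0 := le_max_left _ _
      nlinarith
  have hperm : ∑ j, max (d j - t) 0 = ∑ i ∈ Finset.range m, max (sv Y i ^ 2 - t) 0 := by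
    rw [sum_g_sv Y (fun x => max (x ^ 2 - t) 0)]
    refine (Finset.sum_congr rfl fun j _ => ?_).symm
    rw [Real.sq_sqrt (eig_nonneg Y j)]
  have hsplit : ∑ i ∈ Finset.range m, max (sv Y i ^ 2 - t) 0
      = ∑ i ∈ Finset.range r, (sv Y i ^ 2 - t) := by
    rw [← Finset.sum_range_add_sum_Ico _ hrm]
    have hico : ∑ i ∈ Finset.Ico r m, max (sv Y i ^ 2 - t) 0 = 0 := by
      refine Finset.sum_eq_zero fun i hi => ?_
      have hri : r ≤ i := (Finset.mem_Ico.mp hi).1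
      have h1 : sv Y i ≤ sv Y r := sv_anti Y hri
      have h2 : sv Y i ^ 2 ≤ t := by
        rw [htdef]
        exact pow_le_pow_left₀ (sv_nonneg Y i) h1 2
      exact max_eq_right (by linarith)
    have hrange : ∑ i ∈ Finset.range r, max (sv Y i ^ 2 - t) 0
        = ∑ i ∈ Finset.range r, (sv Y i ^ 2 - t) := by
      refine Finset.sum_congr rfl fun i hi => ?_
      have hir : i ≤ r := le_of_lt (Finset.mem_range.mp hi)
      have h1 : sv Y r ≤ sv Y i := sv_anti Y hir
      have h2 : t ≤ sv Y i ^ 2 := by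
        rw [htdef]
        exact pow_le_pow_left₀ (sv_nonneg Y r) h1 2
      exact max_eq_left (by linarith)
    rw [hico, hrange, add_zero]
  calc ((Yᵀ * Y) * Qmat M).trace = ∑ j, d j * c j := htrace
    _ ≤ ∑ j, (max (d j - t) 0 + t * c j) := Finset.sum_le_sum fun j _ => step1 j
    _ = ∑ j, max (d j - t) 0 + t * ∑ j, c j := by rw [Finset.sum_add_distrib, Finset.mul_sum]
    _ ≤ ∑ j, max (d j - t) 0 + t * r := by
        have := mul_le_mul_of_nonneg_left hcsum ht0
        linarith
    _ = ∑ i ∈ Finset.range r, (sv Y i ^ 2 - t) + t * r := by rw [hperm, hsplit]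
    _ = ∑ i ∈ Finset.range r, sv Y i ^ 2 := by
        rw [Finset.sum_sub_distrib, Finset.sum_const, Finset.card_range]
        push_cast
        ring

private lemma fro_nonneg {n m : ℕ} (M : Matrix (Fin n) (Fin m) ℝ) : 0 ≤ fro M :=
  Real.sqrt_nonneg _

/-- Upper bound: for any `Y` with `‖Y‖_{F,r} ≤ 1` and `rank M ≤ r`, `⟨M, Y⟩ ≤ ‖M‖_F`. -/
private lemma ip_le_fro {n m r : ℕ} (hrm : r ≤ m) (M Y : Matrix (Fin n) (Fin m) ℝ)
    (hk : kdim M ≤ r) (hY : truncFro r Y ≤ 1) : ip M Y ≤ fro M := by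
  set Q := Qmat M with hQdef
  -- Step 1: ip M Y = ip M (Y * Q)
  have h1 : ip M Y = ip M (Y * Q) := by
    rw [ip_eq_trace, ip_eq_trace]
    conv_lhs => rw [← M_mul_Qmat M]
    rw [Matrix.transpose_mul, Qmat_symm, Matrix.mul_assoc, Matrix.trace_mul_comm,
      Matrix.mul_assoc]
  -- Step 2: Cauchy–Schwarz
  have h2 : ip M (Y * Q) ≤ fro M * fro (Y * Q) := by
    rw [ip, fro, fro]
    calc ∑ i, ∑ j, M i j * (Y * Q) i j
        = ∑ p : Fin n × Fin m, M p.1 p.2 * (Y * Q) p.1 p.2 := by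
          rw [Fintype.sum_prod_type]
      _ ≤ Real.sqrt (∑ p : Fin n × Fin m, M p.1 p.2 ^ 2) *
          Real.sqrt (∑ p : Fin n × Fin m, (Y * Q) p.1 p.2 ^ 2) :=
          Real.sum_mul_le_sqrt_mul_sqrt _ _ _
      _ = Real.sqrt (∑ i, ∑ j, M i j ^ 2) * Real.sqrt (∑ i, ∑ j, (Y * Q) i j ^ 2) := by
          rw [Fintype.sum_prod_type, Fintype.sum_prod_type]
  -- Step 3: fro (Y * Q) ≤ truncFro r Y
  have h3 : fro (Y * Q) ≤ truncFro r Y := by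
    have htr : ∑ i, ∑ j, (Y * Q) i j ^ 2 = ((Yᵀ * Y) * Q).trace := by
      rw [sum_sq_eq_trace]
      have e1 : (Y * Q)ᵀ * (Y * Q) = Q * Yᵀ * (Y * Q) := by
        rw [Matrix.transpose_mul, Qmat_symm]
      rw [e1, Matrix.trace_mul_comm]
      have e2 : Y * Q * (Q * Yᵀ) = Y * (Q * (Q * Yᵀ)) := by rw [Matrix.mul_assoc]
      rw [e2, ← Matrix.mul_assoc Q Q, Qmat_mul_self]
      rw [Matrix.trace_mul_comm, Matrix.mul_assoc, Matrix.trace_mul_comm]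
    rw [fro, truncFro, htr]
    exact Real.sqrt_le_sqrt (trace_mul_Qmat_le hrm M Y hk)
  have htf0 : 0 ≤ truncFro r Y := Real.sqrt_nonneg _
  calc ip M Y = ip M (Y * Q) := h1
    _ ≤ fro M * fro (Y * Q) := h2
    _ ≤ fro M * truncFro r Y := mul_le_mul_of_nonneg_left h3 (fro_nonneg M)
    _ ≤ fro M * 1 := mul_le_mul_of_nonneg_left hY (fro_nonneg M)
    _ = fro M := mul_one _

/-- the convex envelope `½‖·‖_{F,r*}²` agrees with `½‖·‖_F²` on matrices of
rank at most `r`: `rank M ≤ r → ‖M‖_{F,r*} = ‖M‖_F`. -/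
theorem lowRankFro_eq_fro_of_rank_le {n m r : ℕ} (hr1 : 1 ≤ r) (hr2 : r ≤ min n m)
    (M : Matrix (Fin n) (Fin m) ℝ) (hrank : M.rank ≤ r) :
    lowRankFro r M = fro M := by
  have hrm : r ≤ m := le_trans hr2 (min_le_right n m)
  have hk : kdim M ≤ r := by
    rw [kdim, finrank_Ksub]
    exact hrank
  set F := fro M with hF
  have hF0 : 0 ≤ F := fro_nonneg M
  have hFsq : F ^ 2 = ∑ i, ∑ j, M i j ^ 2 := by
    rw [hF, fro]
    exact Real.sq_sqrt (Finset.sum_nonneg fun i _ => Finset.sum_nonneg fun j _ => sq_nonneg _)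
  -- the witness
  set Y₀ : Matrix (Fin n) (Fin m) ℝ := F⁻¹ • M with hY₀
  have hY₀sum : ∑ i, ∑ j, Y₀ i j ^ 2 = (F⁻¹ * F) ^ 2 := by
    have : ∑ i, ∑ j, Y₀ i j ^ 2 = F⁻¹ ^ 2 * ∑ i, ∑ j, M i j ^ 2 := by
      rw [Finset.mul_sum]
      refine Finset.sum_congr rfl fun i _ => ?_
      rw [Finset.mul_sum]
      refine Finset.sum_congr rfl fun j _ => ?_
      rw [hY₀, Matrix.smul_apply, smul_eq_mul, mul_pow]
    rw [this, ← hFsq, mul_pow]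
  have hinvF : F⁻¹ * F = 0 ∨ F⁻¹ * F = 1 := by
    rcases eq_or_ne F 0 with h | h
    · left; rw [h, mul_zero]
    · right; exact inv_mul_cancel₀ h
  have hmem : truncFro r Y₀ ≤ 1 ∧ F = ip M Y₀ := by
    constructor
    · rw [truncFro]
      have hle : ∑ i ∈ Finset.range r, sv Y₀ i ^ 2 ≤ ∑ i ∈ Finset.range m, sv Y₀ i ^ 2 :=
        Finset.sum_le_sum_of_subset_of_nonneg
          (Finset.range_subset_range.mpr hrm) (fun i _ _ => sq_nonneg _)
      have heq : ∑ i ∈ Finset.range m, sv Y₀ i ^ 2 = (F⁻¹ * F) ^ 2 := by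
        rw [sum_sv_sq, hY₀sum]
      calc Real.sqrt (∑ i ∈ Finset.range r, sv Y₀ i ^ 2)
          ≤ Real.sqrt ((F⁻¹ * F) ^ 2) := Real.sqrt_le_sqrt (heq ▸ hle)
        _ ≤ 1 := by
            rcases hinvF with h | h <;> rw [h] <;> simp
    · have : ip M Y₀ = F⁻¹ * ∑ i, ∑ j, M i j ^ 2 := by
        rw [ip, Finset.mul_sum]
        refine Finset.sum_congr rfl fun i _ => ?_
        rw [Finset.mul_sum]
        refine Finset.sum_congr rfl fun j _ => ?_
        rw [hY₀, Matrix.smul_apply, smul_eq_mul, sq]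
        ring
      rw [this, ← hFsq, sq, ← mul_assoc]
      rcases hinvF with h | h
      · have hF0' : F = 0 := by
          rcases eq_or_ne F 0 with h' | h'
          · exact h'
          · exact absurd (inv_mul_cancel₀ h') (by rw [h]; norm_num)
        rw [h, zero_mul, hF0']
      · rw [h, one_mul]
  have hgreat : IsGreatest {c : ℝ | ∃ Y, truncFro r Y ≤ 1 ∧ c = ip M Y} F := by
    constructor
    · exact ⟨Y₀, hmem.1, hmem.2⟩
    · rintro c ⟨Y, hY, rfl⟩
      exact ip_le_fro hrm M Y hk hY
  rw [lowRankFro, dualNorm]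
  exact hgreat.csSup_eq
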